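/- Let d ≥ 1, λ > 0, B > 0, and let φ_1, φ_2, …, φ_K ∈ ℝ^d be vectors with ‖φ_τ‖₂ ≤ B for all τ. For k ≥ 1 define U_k = λI + Σ_{τ=1}^{k-1} φ_τ φ_τᵀ. Then for every k ∈ [K], Σ_{τ=1}^{k} min{1, φ_τᵀ U_τ^{-1} φ_τ} ≤ 2 d log(1 + k B² / (d λ)). -/

import Mathlib

open Matrix Finset

private lemma aux_min_le_log {x : ℝ} (hx : 0 ≤ x) : min 1 x ≤ 2 * Real.log (1 + x) := by
  have h1x : (0:ℝ) < 1 + x := by linarith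
  have hlog : 1 - 1/(1+x) ≤ Real.log (1 + x) := by
    have h := Real.log_le_sub_one_of_pos (x := 1/(1+x)) (by positivity)
    rw [Real.log_div one_ne_zero h1x.ne', Real.log_one] at h
    linarith
  rcases le_total x 1 with h | h
  · rw [min_eq_right h]
    have key : x ≤ 2 * (1 - 1/(1+x)) := by
      rw [← sub_nonneg]
      have heq : 2 * (1 - 1/(1+x)) - x = x*(1-x)/(1+x) := by field_simp; ring
      rw [heq]
      exact div_nonneg (mul_nonneg hx (by linarith)) h1x.le
    linarith
  · rw [min_eq_left h]
    have h2 : Real.log 2 ≤ Real.log (1 + x) :=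
      Real.log_le_log (by norm_num) (by linarith)
    have := Real.log_two_gt_d9
    linarith

private lemma aux_psd_vmv {n : ℕ} (u : Fin n → ℝ) :
    (Matrix.vecMulVec u u).PosSemidef := by
  have h : Matrix.vecMulVec u u = (replicateRow (Fin 1) u)ᴴ * replicateRow (Fin 1) u := by
    rw [conjTranspose_replicateRow, star_trivial]
    ext i j
    simp [vecMulVec, Matrix.mul_apply]
  rw [h]
  exact posSemidef_conjTranspose_mul_self _

private lemma aux_quad_nonneg {n : ℕ} {M : Matrix (Fin n) (Fin n) ℝ}
    (hM : M.PosSemidef) (u : Fin n → ℝ) : 0 ≤ u ⬝ᵥ M *ᵥ u := by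
  simpa using hM.dotProduct_mulVec_nonneg u

private lemma aux_trace_eq_sum_eigenvalues {n : ℕ} {A : Matrix (Fin n) (Fin n) ℝ}
    (hA : A.IsHermitian) : A.trace = ∑ i, hA.eigenvalues i := by
  conv_lhs => rw [hA.spectral_theorem]
  rw [Unitary.conjStarAlgAut_apply, Matrix.trace_mul_cycle,
    (Matrix.mem_unitaryGroup_iff').mp (hA.eigenvectorUnitary).2, Matrix.one_mul,
    Matrix.trace_diagonal]
  simp [RCLike.ofReal_real_eq_id]

private lemma aux_log_det_le {n : ℕ} (hn : 1 ≤ n) {A : Matrix (Fin n) (Fin n) ℝ}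
    (hA : A.PosDef) : Real.log A.det ≤ n * Real.log (A.trace / n) := by
  have hn0 : (0:ℝ) < n := by exact_mod_cast hn
  set μ := hA.isHermitian.eigenvalues with hμ
  have hμpos : ∀ i, 0 < μ i := hA.eigenvalues_pos
  have hdet : A.det = ∏ i, μ i := by
    have h := hA.isHermitian.det_eq_prod_eigenvalues
    simpa using h
  have htr : A.trace = ∑ i, μ i := aux_trace_eq_sum_eigenvalues hA.isHermitian
  have hjensen := (strictConcaveOn_log_Ioi.concaveOn).le_map_sum
    (t := (Finset.univ : Finset (Fin n))) (w := fun _ => (n:ℝ)⁻¹) (p := μ)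
    (fun _ _ => by positivity)
    (by
      rw [Finset.sum_const, Finset.card_univ, Fintype.card_fin, nsmul_eq_mul]
      field_simp)
    (fun i _ => Set.mem_Ioi.mpr (hμpos i))
  simp only [smul_eq_mul, ← Finset.mul_sum] at hjensen
  have hlogdet : Real.log A.det = ∑ i, Real.log (μ i) := by
    rw [hdet, Real.log_prod (fun i _ => (hμpos i).ne')]
  rw [hlogdet, htr]
  have : (n:ℝ) * ((n:ℝ)⁻¹ * ∑ i, Real.log (μ i)) ≤
      (n:ℝ) * Real.log ((n:ℝ)⁻¹ * ∑ i, μ i) :=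
    mul_le_mul_of_nonneg_left hjensen hn0.le
  rw [← mul_assoc, mul_inv_cancel₀ hn0.ne', one_mul] at this
  calc ∑ i, Real.log (μ i) ≤ (n:ℝ) * Real.log ((n:ℝ)⁻¹ * ∑ i, μ i) := this
    _ = (n:ℝ) * Real.log ((∑ i, μ i) / n) := by rw [inv_mul_eq_div]

/-- Elliptic potential lemma (Lemma 11, Abbasi-Yadkori et al.):
for vectors `φ τ` with `‖φ τ‖₂ ≤ B` and `U k = λ I + ∑_{τ=1}^{k-1} φ τ (φ τ)ᵀ`,
`∑_{τ=1}^{k} min {1, ‖φ τ‖²_{(U τ)⁻¹}} ≤ 2 d log (1 + k B² / (d λ))`. -/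
theorem stmt0 (d K : ℕ) (hd : 1 ≤ d) (lam B : ℝ) (hlam : 0 < lam) (hB : 0 < B)
    (φ : ℕ → Fin d → ℝ)
    (hφ : ∀ τ, Real.sqrt (∑ i, φ τ i ^ 2) ≤ B)
    (U : ℕ → Matrix (Fin d) (Fin d) ℝ)
    (hU : ∀ k, U k = lam • (1 : Matrix (Fin d) (Fin d) ℝ) +
      ∑ τ ∈ Finset.Icc 1 (k - 1), Matrix.vecMulVec (φ τ) (φ τ)) :
    ∀ k ∈ Finset.Icc 1 K,
      ∑ τ ∈ Finset.Icc 1 k, min 1 (φ τ ⬝ᵥ (U τ)⁻¹ *ᵥ φ τ) ≤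
        2 * d * Real.log (1 + k * B ^ 2 / (d * lam)) := by
  have hd0 : (0:ℝ) < d := by exact_mod_cast hd
  -- Positive definiteness of U j
  have hUpos : ∀ j, (U j).PosDef := by
    intro j
    rw [hU j]
    refine Matrix.PosDef.add_posSemidef ?_ ?_
    · have hsm : lam • (1 : Matrix (Fin d) (Fin d) ℝ) =
          Matrix.diagonal (fun _ => lam) := by
        ext i j
        by_cases h : i = j <;> simp [Matrix.one_apply, Matrix.diagonal, h]
      rw [hsm]
      exact Matrix.PosDef.diagonal (fun _ => hlam)
    · exact Finset.sum_induction _ _ (fun a b ha hb => ha.add hb)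
        Matrix.PosSemidef.zero (fun i _ => aux_psd_vmv _)
  have hHnn : ∀ τ, 0 ≤ φ τ ⬝ᵥ (U τ)⁻¹ *ᵥ φ τ := fun τ =>
    aux_quad_nonneg (hUpos τ).posSemidef.inv _
  -- recurrence for the determinant
  have hdetrec : ∀ τ, 1 ≤ τ → (U (τ+1)).det =
      (U τ).det * (1 + φ τ ⬝ᵥ (U τ)⁻¹ *ᵥ φ τ) := by
    intro τ hτ
    · have hstep : U (τ+1) = U τ + Matrix.vecMulVec (φ τ) (φ τ) := by
        obtain ⟨m, rfl⟩ : ∃ m, τ = m + 1 := ⟨τ - 1, by omega⟩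
        rw [hU, hU]
        simp only [Nat.add_sub_cancel]
        rw [Finset.sum_Icc_succ_top (by omega : 1 ≤ m + 1), ← add_assoc]
      have hA : IsUnit (U τ).det := (hUpos τ).det_pos.ne'.isUnit
      rw [hstep, vecMulVec_eq (Fin 1), Matrix.det_add_replicateCol_mul_replicateRow hA]
      congr 1
      rw [Matrix.mul_assoc, ← Matrix.replicateCol_mulVec]
      have hgen : ∀ (inst : DecidableEq (Fin 1)) (M : Matrix (Fin 1) (Fin 1) ℝ),
          @Matrix.det (Fin 1) inst _ ℝ _ M = M 0 0 := by
        intro inst M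
        rw [Subsingleton.elim inst (instDecidableEqFin 1)]
        exact Matrix.det_fin_one M
      refine (hgen _ _).trans ?_
      simp [Matrix.add_apply, Matrix.one_apply]
  -- telescoping
  have htel : ∀ m, ∑ τ ∈ Finset.Icc 1 m, Real.log (1 + φ τ ⬝ᵥ (U τ)⁻¹ *ᵥ φ τ) =
      Real.log (U (m+1)).det - Real.log (U 1).det := by
    intro m
    induction m with
    | zero => simp
    | succ m ih =>
      rw [Finset.sum_Icc_succ_top (by omega : 1 ≤ m + 1), ih,
        hdetrec (m+1) (by omega),
        Real.log_mul (hUpos (m+1)).det_pos.ne'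
          (by have := hHnn (m+1); linarith)]
      ring
  intro k hk
  simp only [Finset.mem_Icc] at hk
  -- trace identity
  have htrace : (U (k+1)).trace = d * lam + ∑ τ ∈ Finset.Icc 1 k, (∑ i, φ τ i ^ 2) := by
    rw [hU]
    simp only [Nat.add_sub_cancel]
    rw [Matrix.trace_add, Matrix.trace_smul, Matrix.trace_one, Matrix.trace_sum]
    congr 1
    · simp [mul_comm]
    · refine Finset.sum_congr rfl fun τ _ => ?_
      simp [Matrix.trace, Matrix.diag, Matrix.vecMulVec, sq]
  have hφ2 : ∀ τ, (∑ i, φ τ i ^ 2) ≤ B ^ 2 := by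
    intro τ
    have h3 : (0:ℝ) ≤ ∑ i, φ τ i ^ 2 := by positivity
    calc ∑ i, φ τ i ^ 2 = (Real.sqrt (∑ i, φ τ i ^ 2)) ^ 2 := (Real.sq_sqrt h3).symm
      _ ≤ B ^ 2 := pow_le_pow_left₀ (Real.sqrt_nonneg _) (hφ τ) 2
  have htrub : (U (k+1)).trace ≤ d * lam + k * B ^ 2 := by
    rw [htrace]
    have : ∑ τ ∈ Finset.Icc 1 k, (∑ i, φ τ i ^ 2) ≤
        ∑ τ ∈ Finset.Icc 1 k, B ^ 2 :=
      Finset.sum_le_sum fun τ _ => hφ2 τ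
    rw [Finset.sum_const, Nat.card_Icc] at this
    simp only [Nat.add_sub_cancel, nsmul_eq_mul] at this
    linarith
  -- determinant of U 1
  have hU1det : Real.log (U 1).det = d * Real.log lam := by
    have h1 : U 1 = lam • (1 : Matrix (Fin d) (Fin d) ℝ) := by
      rw [hU]; simp
    rw [h1, Matrix.det_smul, Matrix.det_one, mul_one, Fintype.card_fin,
      Real.log_pow]
  -- main estimate
  have hstep1 : ∑ τ ∈ Finset.Icc 1 k, min 1 (φ τ ⬝ᵥ (U τ)⁻¹ *ᵥ φ τ) ≤
      2 * (Real.log (U (k+1)).det - Real.log (U 1).det) := by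
    calc ∑ τ ∈ Finset.Icc 1 k, min 1 (φ τ ⬝ᵥ (U τ)⁻¹ *ᵥ φ τ)
        ≤ ∑ τ ∈ Finset.Icc 1 k, 2 * Real.log (1 + φ τ ⬝ᵥ (U τ)⁻¹ *ᵥ φ τ) :=
          Finset.sum_le_sum fun τ _ => aux_min_le_log (hHnn τ)
      _ = 2 * ∑ τ ∈ Finset.Icc 1 k, Real.log (1 + φ τ ⬝ᵥ (U τ)⁻¹ *ᵥ φ τ) := by
          rw [Finset.mul_sum]
      _ = 2 * (Real.log (U (k+1)).det - Real.log (U 1).det) := by rw [htel k]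
  have hlogdet : Real.log (U (k+1)).det ≤
      d * Real.log ((d * lam + k * B ^ 2) / d) := by
    have h1 := aux_log_det_le hd (hUpos (k+1))
    have htrpos : (0:ℝ) < (U (k+1)).trace := by
      rw [htrace]
      have : (0:ℝ) ≤ ∑ τ ∈ Finset.Icc 1 k, (∑ i, φ τ i ^ 2) := by positivity
      nlinarith
    have h2 : Real.log ((U (k+1)).trace / d) ≤
        Real.log ((d * lam + k * B ^ 2) / d) := by
      apply Real.log_le_log (by positivity)
      gcongr
    exact le_trans h1 (mul_le_mul_of_nonneg_left h2 hd0.le)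
  have hfinal : d * Real.log ((d * lam + k * B ^ 2) / d) - d * Real.log lam =
      d * Real.log (1 + k * B ^ 2 / (d * lam)) := by
    rw [← mul_sub]
    congr 1
    rw [← Real.log_div (by positivity) hlam.ne']
    congr 1
    field_simp
  calc ∑ τ ∈ Finset.Icc 1 k, min 1 (φ τ ⬝ᵥ (U τ)⁻¹ *ᵥ φ τ)
      ≤ 2 * (Real.log (U (k+1)).det - Real.log (U 1).det) := hstep1
    _ ≤ 2 * (d * Real.log ((d * lam + k * B ^ 2) / d) - d * Real.log lam) := by
        rw [hU1det]
        have := hlogdet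
        linarith
    _ = 2 * d * Real.log (1 + k * B ^ 2 / (d * lam)) := by
        rw [hfinal]
        ring
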